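/- Let γ ∈ (0,1), let ε ∈ (0,1), and let y ∈ M satisfy G_γ(y) < (π²/4)·(1−ε)². Then for every x ∈ [0,1] one has y(x) > ε·‖y‖_{L²[0,1]}. -/

import Mathlib

open MeasureTheory Set Real
open scoped ENNReal Interval
open intervalIntegral

noncomputable section

namespace PLBaux

open intervalIntegral

lemma hasDerivAt_lin (a : ℝ) (t : ℝ) :
    HasDerivAt (fun u : ℝ => π / 2 * (u - a)) (π / 2) t := by
  simpa using ((hasDerivAt_id t).sub_const a).const_mul (π / 2)

lemma hasDerivAt_sinpart (a : ℝ) (t : ℝ) :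
    HasDerivAt (fun u : ℝ => 2 / π * Real.sin (π / 2 * (u - a)))
      (Real.cos (π / 2 * (t - a))) t := by
  have h := ((hasDerivAt_lin a t).sin).const_mul (2 / π)
  refine h.congr_deriv ?_
  have hπ : (π : ℝ) ≠ 0 := Real.pi_ne_zero
  field_simp

lemma hasDerivAt_cospart (a : ℝ) (t : ℝ) :
    HasDerivAt (fun u : ℝ => -(4 / π ^ 2) * Real.cos (π / 2 * (u - a)))
      (2 / π * Real.sin (π / 2 * (t - a))) t := by
  have h := ((hasDerivAt_lin a t).cos).const_mul (-(4 / π ^ 2))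
  refine h.congr_deriv ?_
  have hπ : (π : ℝ) ≠ 0 := Real.pi_ne_zero
  field_simp
  ring

/-- Sharp Volterra-type bound: if `b - a ≤ 1` then
`∫ₐᵇ (∫ₐˣ f)² dx ≤ (4/π²) ∫ₐᵇ f²`. -/
lemma volterra_right {f : ℝ → ℝ} (hm : Measurable f) {a b : ℝ} (hab : a ≤ b)
    (hb1 : b - a ≤ 1) (hf : IntervalIntegrable f volume a b)
    (hf2 : IntervalIntegrable (fun t => f t ^ 2) volume a b) :
    (∫ x in a..b, (∫ t in a..x, f t) ^ 2) ≤ 4 / π ^ 2 * ∫ t in a..b, f t ^ 2 := by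
  have πpos : (0:ℝ) < π := Real.pi_pos
  set c : ℝ → ℝ := fun t => Real.cos (π / 2 * (t - a)) with hc_def
  set S : ℝ → ℝ := fun x => 2 / π * Real.sin (π / 2 * (x - a)) with hS_def
  set W : ℝ → ℝ≥0∞ := fun t => ENNReal.ofReal (f t ^ 2 / c t) with hW_def
  set g : ℝ → ℝ := fun x => ∫ t in a..x, f t with hg_def
  have hc_cont : Continuous c :=
    Real.continuous_cos.comp (continuous_const.mul (continuous_id.sub continuous_const))
  have hS_cont : Continuous S :=
    continuous_const.mul
      (Real.continuous_sin.comp (continuous_const.mul (continuous_id.sub continuous_const)))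
  have hc_meas : Measurable c := hc_cont.measurable
  have hW_meas : Measurable W := ((hm.pow_const 2).div hc_meas).ennreal_ofReal
  have hc_nonneg : ∀ t ∈ Icc a b, 0 ≤ c t := by
    intro t ht
    apply Real.cos_nonneg_of_mem_Icc
    constructor
    · nlinarith [ht.1]
    · nlinarith [ht.2]
  have hS_nonneg : ∀ x ∈ Icc a b, 0 ≤ S x := by
    intro x hx
    apply mul_nonneg (by positivity)
    apply Real.sin_nonneg_of_nonneg_of_le_pi
    · nlinarith [hx.1]
    · nlinarith [hx.2]
  have hc_mono : ∀ t ∈ Icc a b, c b ≤ c t := by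
    intro t ht
    apply Real.cos_le_cos_of_nonneg_of_le_pi
    · nlinarith [ht.1]
    · nlinarith
    · nlinarith [ht.2]
  -- antiderivative computations
  have hSint : ∀ x, a ≤ x → (∫ t in a..x, c t) = S x := by
    intro x hx
    rw [intervalIntegral.integral_eq_sub_of_hasDerivAt
      (fun t _ => hasDerivAt_sinpart a t) (hc_cont.intervalIntegrable a x)]
    simp [hS_def]
  have hVint : ∀ t, t ≤ b → (∫ x in t..b, S x) = 4 / π ^ 2 * (c t - c b) := by
    intro t _
    rw [intervalIntegral.integral_eq_sub_of_hasDerivAt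
      (fun x _ => hasDerivAt_cospart a x) (hS_cont.intervalIntegrable t b)]
    simp [hc_def]; ring
  -- integrability facts
  have hfIoc : IntegrableOn f (Ioc a b) := (intervalIntegrable_iff_integrableOn_Ioc_of_le hab).mp hf
  have hf2Ioc : IntegrableOn (fun t => f t ^ 2) (Ioc a b) :=
    (intervalIntegrable_iff_integrableOn_Ioc_of_le hab).mp hf2
  have hg_cont : ContinuousOn g (Icc a b) := by
    have := continuousOn_primitive_interval
      (a := a) (b := b) (μ := volume) (f := f)
      (by rw [uIcc_of_le hab]; exact (integrableOn_Icc_iff_integrableOn_Ioc).mpr hfIoc)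
    rwa [uIcc_of_le hab] at this
  have hg2int : IntegrableOn (fun x => g x ^ 2) (Ioc a b) :=
    ((hg_cont.pow 2).integrableOn_Icc).mono_set Ioc_subset_Icc_self
  -- step A : pointwise Cauchy-Schwarz
  have stepA : ∀ x ∈ Ioc a b,
      ENNReal.ofReal (g x ^ 2) ≤ ENNReal.ofReal (S x) * ∫⁻ t in Ioc a x, W t := by
    intro x hx
    have hax : a ≤ x := le_of_lt hx.1
    set u : ℝ → ℝ≥0∞ := fun t => ENNReal.ofReal (Real.sqrt (c t)) with hu_def
    set v : ℝ → ℝ≥0∞ := fun t => ENNReal.ofReal (|f t| / Real.sqrt (c t)) with hv_def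
    have hu_meas : Measurable u := (hc_meas.sqrt).ennreal_ofReal
    have hv_meas : Measurable v := ((hm.abs).div hc_meas.sqrt).ennreal_ofReal
    have hconj : Real.HolderConjugate 2 2 := Real.HolderConjugate.two_two
    have hCS := ENNReal.lintegral_mul_le_Lp_mul_Lq (volume.restrict (Ioc a x)) hconj
      hu_meas.aemeasurable hv_meas.aemeasurable
    -- a.e. facts on Ioc a x
    have hsubI : Ioc a x ⊆ Icc a b := fun t ht => ⟨le_of_lt ht.1, le_trans ht.2 hx.2⟩
    have hmem : ∀ᵐ t ∂(volume.restrict (Ioc a x)), t ∈ Ioc a x :=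
      ae_restrict_mem measurableSet_Ioc
    have hne : ∀ᵐ t ∂(volume.restrict (Ioc a x)), t ≠ a + 1 := by
      apply ae_restrict_of_ae
      refine ae_iff.mpr ?_
      have : {t : ℝ | ¬ t ≠ a + 1} = {a + 1} := by ext t; simp
      rw [this]; exact Real.volume_singleton
    -- |f| ≤ u * v a.e.
    have h1 : (∫⁻ t in Ioc a x, ENNReal.ofReal |f t|) ≤ ∫⁻ t, (u * v) t ∂(volume.restrict (Ioc a x)) := by
      apply lintegral_mono_ae
      filter_upwards [hmem, hne] with t ht htne
      have hct : 0 < c t := by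
        apply Real.cos_pos_of_mem_Ioo
        constructor
        · nlinarith [ht.1, (hsubI ht).1]
        · have h1' : t - a ≤ 1 := by linarith [ht.2, hx.2]
          have h2' : t - a < 1 := lt_of_le_of_ne h1' (by intro hcon; apply htne; linarith)
          nlinarith
      have hsq : Real.sqrt (c t) ≠ 0 := ne_of_gt (Real.sqrt_pos.mpr hct)
      have : u t * v t = ENNReal.ofReal |f t| := by
        rw [hu_def, hv_def, ← ENNReal.ofReal_mul (Real.sqrt_nonneg _)]
        congr 1
        field_simp
      simp only [Pi.mul_apply]
      rw [this]
    -- compute ∫ u²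
    have h4 : (∫⁻ t, u t ^ (2:ℝ) ∂(volume.restrict (Ioc a x))) = ENNReal.ofReal (S x) := by
      have heq : ∀ᵐ t ∂(volume.restrict (Ioc a x)), u t ^ (2:ℝ) = ENNReal.ofReal (c t) := by
        filter_upwards [hmem] with t ht
        have hcnn := hc_nonneg t (hsubI ht)
        rw [hu_def]
        rw [show ((2:ℝ) = ((2:ℕ):ℝ)) by norm_num, ENNReal.rpow_natCast,
          ← ENNReal.ofReal_pow (Real.sqrt_nonneg _), Real.sq_sqrt hcnn]
      rw [lintegral_congr_ae heq,
        ← ofReal_integral_eq_lintegral_ofReal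
          ((hc_cont.integrableOn_Icc).mono_set Ioc_subset_Icc_self)
          ((ae_restrict_iff' measurableSet_Ioc).mpr
            (ae_of_all _ fun t ht => hc_nonneg t (hsubI ht)))]
      rw [← intervalIntegral.integral_of_le hax, hSint x hax]
    -- ∫ v² = ∫ W
    have h5 : (∫⁻ t, v t ^ (2:ℝ) ∂(volume.restrict (Ioc a x))) = ∫⁻ t in Ioc a x, W t := by
      apply lintegral_congr_ae
      filter_upwards [hmem] with t ht
      have hcnn := hc_nonneg t (hsubI ht)
      rw [hv_def, hW_def, show ((2:ℝ) = ((2:ℕ):ℝ)) by norm_num, ENNReal.rpow_natCast,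
        ← ENNReal.ofReal_pow (by positivity)]
      congr 1
      rw [div_pow, sq_abs, Real.sq_sqrt hcnn]
    -- |g x| ≤ ∫ |f|
    have h3 : |g x| ≤ ∫ t in a..x, |f t| := intervalIntegral.abs_integral_le_integral_abs hax
    have h2 : ENNReal.ofReal (∫ t in a..x, |f t|) = ∫⁻ t in Ioc a x, ENNReal.ofReal |f t| := by
      rw [intervalIntegral.integral_of_le hax,
        ofReal_integral_eq_lintegral_ofReal
          ((hfIoc.mono_set (Ioc_subset_Ioc le_rfl hx.2)).abs)
          (ae_of_all _ fun t => abs_nonneg _)]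
    calc ENNReal.ofReal (g x ^ 2) = ENNReal.ofReal |g x| ^ 2 := by
          rw [← ENNReal.ofReal_pow (abs_nonneg _), sq_abs]
      _ ≤ ENNReal.ofReal (∫ t in a..x, |f t|) ^ 2 :=
          pow_le_pow_left' (ENNReal.ofReal_le_ofReal h3) 2
      _ = (∫⁻ t in Ioc a x, ENNReal.ofReal |f t|) ^ 2 := by rw [h2]
      _ ≤ (∫⁻ t, (u * v) t ∂(volume.restrict (Ioc a x))) ^ 2 := pow_le_pow_left' h1 2
      _ ≤ ((∫⁻ t, u t ^ (2:ℝ) ∂(volume.restrict (Ioc a x))) ^ (1/(2:ℝ)) *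
            (∫⁻ t, v t ^ (2:ℝ) ∂(volume.restrict (Ioc a x))) ^ (1/(2:ℝ))) ^ 2 :=
          pow_le_pow_left' hCS 2
      _ = ENNReal.ofReal (S x) * ∫⁻ t in Ioc a x, W t := by
          have hhalf : ∀ A : ℝ≥0∞, (A ^ (1/(2:ℝ))) ^ (2:ℕ) = A := by
            intro A
            rw [← ENNReal.rpow_natCast (A ^ (1/(2:ℝ))) 2, ← ENNReal.rpow_mul]
            norm_num
          rw [mul_pow, hhalf, hhalf, h4, h5]
  -- the kernel
  set K : ℝ → ℝ → ℝ≥0∞ := fun x t =>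
    ENNReal.ofReal (S x) * Set.indicator (Iic x) (fun _ => (1:ℝ≥0∞)) t * W t with hK_def
  have hK_meas : Measurable (Function.uncurry K) := by
    apply Measurable.mul
    apply Measurable.mul
    · exact (hS_cont.measurable.comp measurable_fst).ennreal_ofReal
    · have : (fun z : ℝ × ℝ => Set.indicator (Iic z.1) (fun _ => (1:ℝ≥0∞)) z.2) =
          Set.indicator {z : ℝ × ℝ | z.2 ≤ z.1} (fun _ => (1:ℝ≥0∞)) := by
        ext z; simp [Set.indicator_apply]
      exact this ▸ measurable_const.indicator (measurableSet_le measurable_snd measurable_fst)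
    · exact hW_meas.comp measurable_snd
  have stepB : ∀ x ∈ Ioc a b,
      (∫⁻ t in Ioc a b, K x t) = ENNReal.ofReal (S x) * ∫⁻ t in Ioc a x, W t := by
    intro x hx
    have heq : ∀ t, K x t = ENNReal.ofReal (S x) * Set.indicator (Iic x) W t := by
      intro t; by_cases h : t ∈ Iic x <;> simp [hK_def, h]
    simp_rw [heq]
    rw [lintegral_const_mul _ (hW_meas.indicator measurableSet_Iic),
      lintegral_indicator measurableSet_Iic, Measure.restrict_restrict measurableSet_Iic]
    congr 2
    rw [Set.inter_comm, Set.Ioc_inter_Iic, min_eq_right hx.2]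
  have stepC : ∀ t ∈ Ioc a b,
      (∫⁻ x in Ioc a b, K x t) = W t * ENNReal.ofReal (4 / π ^ 2 * (c t - c b)) := by
    intro t ht
    have heq : ∀ x, K x t = Set.indicator (Ici t) (fun x => ENNReal.ofReal (S x)) x * W t := by
      intro x
      by_cases h : t ≤ x
      · simp [hK_def, Set.indicator_of_mem (mem_Iic.mpr h),
          Set.indicator_of_mem (mem_Ici.mpr h)]
      · simp [hK_def, Set.indicator_of_notMem (fun hc => h (mem_Iic.mp hc)),
          Set.indicator_of_notMem (fun hc => h (mem_Ici.mp hc))]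
    simp_rw [heq]
    rw [lintegral_mul_const _
        ((hS_cont.measurable.ennreal_ofReal).indicator measurableSet_Ici),
      lintegral_indicator measurableSet_Ici, Measure.restrict_restrict measurableSet_Ici]
    have hset : Ici t ∩ Ioc a b = Icc t b := by
      ext z
      simp only [mem_inter_iff, mem_Ici, mem_Ioc, mem_Icc]
      constructor
      · rintro ⟨h1, _, h3⟩; exact ⟨h1, h3⟩
      · rintro ⟨h1, h2⟩; exact ⟨h1, lt_of_lt_of_le ht.1 h1, h2⟩
    rw [hset, ← Measure.restrict_congr_set Ioc_ae_eq_Icc]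
    rw [← ofReal_integral_eq_lintegral_ofReal
        ((hS_cont.integrableOn_Icc).mono_set Ioc_subset_Icc_self)
        ((ae_restrict_iff' measurableSet_Ioc).mpr (ae_of_all _ fun x hx =>
          hS_nonneg x ⟨le_of_lt (lt_of_lt_of_le ht.1 (le_of_lt hx.1)), hx.2⟩))]
    rw [← intervalIntegral.integral_of_le ht.2, hVint t ht.2, mul_comm]
  have stepD : ∀ t ∈ Ioc a b,
      W t * ENNReal.ofReal (4 / π ^ 2 * (c t - c b)) ≤ ENNReal.ofReal (4 / π ^ 2 * f t ^ 2) := by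
    intro t ht
    have htIcc : t ∈ Icc a b := ⟨le_of_lt ht.1, ht.2⟩
    have hcnn := hc_nonneg t htIcc
    have hcb := hc_mono t htIcc
    have hcbnn := hc_nonneg b ⟨hab, le_rfl⟩
    rw [hW_def, ← ENNReal.ofReal_mul (by positivity)]
    apply ENNReal.ofReal_le_ofReal
    have key : f t ^ 2 / c t * c t ≤ f t ^ 2 := by
      rcases hcnn.eq_or_lt with h | h
      · rw [← h]; simp [sq_nonneg]
      · rw [div_mul_cancel₀ _ (ne_of_gt h)]
    have h0 : (0:ℝ) ≤ f t ^ 2 / c t := div_nonneg (sq_nonneg _) hcnn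
    have hA : f t ^ 2 / c t * (4 / π ^ 2 * (c t - c b)) ≤ f t ^ 2 / c t * (4 / π ^ 2 * c t) := by
      apply mul_le_mul_of_nonneg_left _ h0
      apply mul_le_mul_of_nonneg_left (by linarith) (by positivity)
    have hC := mul_le_mul_of_nonneg_left key (show (0:ℝ) ≤ 4 / π ^ 2 by positivity)
    nlinarith [hA, hC]
  -- assemble
  have key : ENNReal.ofReal (∫ x in a..b, g x ^ 2) ≤
      ENNReal.ofReal (4 / π ^ 2 * ∫ t in a..b, f t ^ 2) := by
    calc ENNReal.ofReal (∫ x in a..b, g x ^ 2)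
        = ∫⁻ x in Ioc a b, ENNReal.ofReal (g x ^ 2) := by
          rw [intervalIntegral.integral_of_le hab,
            ofReal_integral_eq_lintegral_ofReal hg2int (ae_of_all _ fun x => sq_nonneg _)]
      _ ≤ ∫⁻ x in Ioc a b, ENNReal.ofReal (S x) * ∫⁻ t in Ioc a x, W t := by
          apply lintegral_mono_ae
          exact (ae_restrict_iff' measurableSet_Ioc).mpr (ae_of_all _ stepA)
      _ = ∫⁻ x in Ioc a b, ∫⁻ t in Ioc a b, K x t := by
          apply setLIntegral_congr_fun measurableSet_Ioc
          exact fun x hx => (stepB x hx).symm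
      _ = ∫⁻ t in Ioc a b, ∫⁻ x in Ioc a b, K x t :=
          lintegral_lintegral_swap hK_meas.aemeasurable
      _ = ∫⁻ t in Ioc a b, W t * ENNReal.ofReal (4 / π ^ 2 * (c t - c b)) := by
          apply setLIntegral_congr_fun measurableSet_Ioc
          exact stepC
      _ ≤ ∫⁻ t in Ioc a b, ENNReal.ofReal (4 / π ^ 2 * f t ^ 2) := by
          apply lintegral_mono_ae
          exact (ae_restrict_iff' measurableSet_Ioc).mpr (ae_of_all _ stepD)
      _ = ENNReal.ofReal (∫ t in a..b, 4 / π ^ 2 * f t ^ 2) := by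
          rw [intervalIntegral.integral_of_le hab,
            ofReal_integral_eq_lintegral_ofReal (hf2Ioc.const_mul (4 / π ^ 2))
              (ae_of_all _ fun t => by positivity)]
      _ = ENNReal.ofReal (4 / π ^ 2 * ∫ t in a..b, f t ^ 2) := by
          rw [intervalIntegral.integral_const_mul]
  have hRHSnn : (0:ℝ) ≤ 4 / π ^ 2 * ∫ t in a..b, f t ^ 2 := by
    apply mul_nonneg (by positivity)
    exact intervalIntegral.integral_nonneg hab fun u _ => sq_nonneg _
  exact (ENNReal.ofReal_le_ofReal_iff hRHSnn).mp key

lemma volterra_left {f : ℝ → ℝ} (hm : Measurable f) {a b : ℝ} (hab : a ≤ b)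
    (hb1 : b - a ≤ 1) (hf : IntervalIntegrable f volume a b)
    (hf2 : IntervalIntegrable (fun t => f t ^ 2) volume a b) :
    (∫ x in a..b, (∫ t in x..b, f t) ^ 2) ≤ 4 / π ^ 2 * ∫ t in a..b, f t ^ 2 := by
  have hFm : Measurable (fun t => f (a + b - t)) :=
    hm.comp (measurable_const.sub measurable_id)
  have hFf : IntervalIntegrable (fun t => f (a + b - t)) volume a b := by
    have := (hf.comp_sub_left (a + b)).symm
    simpa using this
  have hFf2 : IntervalIntegrable (fun t => f (a + b - t) ^ 2) volume a b := by
    have := (hf2.comp_sub_left (a + b)).symm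
    simpa using this
  have key := volterra_right hFm hab hb1 hFf hFf2
  have h1 : ∀ x, (∫ t in a..x, f (a + b - t)) = ∫ t in a + b - x..b, f t := by
    intro x
    have := intervalIntegral.integral_comp_sub_left (a := a) (b := x) f (a + b)
    rw [this]
    norm_num
  have h2 : (∫ x in a..b, (∫ t in a + b - x..b, f t) ^ 2) =
      ∫ x in a..b, (∫ t in x..b, f t) ^ 2 := by
    have := intervalIntegral.integral_comp_sub_left (a := a) (b := b)
      (fun x => (∫ t in x..b, f t) ^ 2) (a + b)
    rw [this]
    norm_num
  have h3 : (∫ t in a..b, f (a + b - t) ^ 2) = ∫ t in a..b, f t ^ 2 := by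
    have := intervalIntegral.integral_comp_sub_left (a := a) (b := b)
      (fun t => f t ^ 2) (a + b)
    rw [this]
    norm_num
  simp_rw [h1, h3] at key
  rw [h2] at key
  exact key

lemma sq_integral_le_integral_sq {g : ℝ → ℝ}
    (hg1 : IntervalIntegrable g volume 0 1)
    (hg2 : IntervalIntegrable (fun x => g x ^ 2) volume 0 1) :
    (∫ x in (0:ℝ)..1, g x) ^ 2 ≤ ∫ x in (0:ℝ)..1, g x ^ 2 := by
  set m : ℝ := ∫ x in (0:ℝ)..1, g x with hm_def
  have h0 : (0:ℝ) ≤ ∫ x in (0:ℝ)..1, (g x - m) ^ 2 :=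
    intervalIntegral.integral_nonneg zero_le_one fun u _ => sq_nonneg _
  have hexp : (∫ x in (0:ℝ)..1, (g x - m) ^ 2) =
      (∫ x in (0:ℝ)..1, g x ^ 2) - 2 * m * m + m ^ 2 := by
    have : ∀ x, (g x - m) ^ 2 = g x ^ 2 - 2 * m * g x + m ^ 2 := fun x => by ring
    simp_rw [this]
    rw [intervalIntegral.integral_add (hg2.sub ((hg1.const_mul (2 * m))))
        intervalIntegrable_const,
      intervalIntegral.integral_sub hg2 (hg1.const_mul (2 * m)),
      intervalIntegral.integral_const_mul, intervalIntegral.integral_const]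
    simp [← hm_def]
  nlinarith [h0, hexp]

end PLBaux

open PLBaux


/-- Pairs `(y, y')` representing a function of Sobolev class `W¹₂[0,1]`:
`y` is absolutely continuous on `[0,1]` (being an integral of `y'`)
with derivative `y'` belonging to `L²[0,1]`. -/
def W12 : Set ((ℝ → ℝ) × (ℝ → ℝ)) :=
  {p | (∀ x ∈ Icc (0:ℝ) 1, p.1 x = p.1 0 + ∫ t in (0:ℝ)..x, p.2 t) ∧
    IntervalIntegrable p.2 volume 0 1 ∧
    IntervalIntegrable (fun t => (p.2 t) ^ 2) volume 0 1}

/-- The Rayleigh quotient `(∫₀¹ ((y')² + q y²) dx) / (∫₀¹ y² dx)`. -/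
def Rayleigh (q : ℝ → ℝ) (p : (ℝ → ℝ) × (ℝ → ℝ)) : ℝ :=
  (∫ t in (0:ℝ)..1, ((p.2 t) ^ 2 + q t * (p.1 t) ^ 2)) /
    ∫ t in (0:ℝ)..1, (p.1 t) ^ 2

/-- The smallest eigenvalue `λ₁(q)` of the Neumann problem `-y'' + q y = λ y`,
`y'(0) = y'(1) = 0`, defined as the infimum of Rayleigh quotients over
nonzero `y ∈ W¹₂[0,1]`. -/
def lambda1 (q : ℝ → ℝ) : ℝ :=
  sInf {r | ∃ p ∈ W12, 0 < (∫ t in (0:ℝ)..1, (p.1 t) ^ 2) ∧ r = Rayleigh q p}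

/-- The class `A_γ` of potentials: `q ∈ L¹[0,1]`, `q ≥ 0` a.e. on `[0,1]`,
`∫₀¹ q^γ dx = 1`. -/
def Agamma (γ : ℝ) : Set (ℝ → ℝ) :=
  {q | IntervalIntegrable q volume 0 1 ∧
    (∀ᵐ t ∂(volume.restrict (Icc (0:ℝ) 1)), 0 ≤ q t) ∧
    (∫ t in (0:ℝ)..1, q t ^ γ) = 1}

/-- `m_γ := inf_{q ∈ A_γ} λ₁(q)`. -/
def mGamma (γ : ℝ) : ℝ := sInf (lambda1 '' Agamma γ)

/-- The set `M` of uniformly positive functions of class `W¹₂[0,1]`. -/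
def Mset : Set ((ℝ → ℝ) × (ℝ → ℝ)) :=
  {p ∈ W12 | ∃ ζ > (0:ℝ), ∀ x ∈ Icc (0:ℝ) 1, ζ ≤ p.1 x}

/-- `J_γ(y) := ∫₀¹ (y')² dx + (∫₀¹ y^{2γ/(γ−1)} dx)^{(γ−1)/γ}`. -/
def Jg (γ : ℝ) (p : (ℝ → ℝ) × (ℝ → ℝ)) : ℝ :=
  (∫ t in (0:ℝ)..1, (p.2 t) ^ 2) +
    (∫ t in (0:ℝ)..1, (p.1 t) ^ (2 * γ / (γ - 1))) ^ ((γ - 1) / γ)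

/-- `G_γ(y) := J_γ(y) / ∫₀¹ y² dx`. -/
def Gg (γ : ℝ) (p : (ℝ → ℝ) × (ℝ → ℝ)) : ℝ :=
  Jg γ p / ∫ t in (0:ℝ)..1, (p.1 t) ^ 2

/-- If `y ∈ M` satisfies `G_γ(y) < (π²/4)(1−ε)²` for some `ε ∈ (0,1)`, then
`y(x) > ε‖y‖_{L²[0,1]}` for every `x ∈ [0,1]`. -/
theorem pointwise_lower_bound (γ : ℝ) (hγ : γ ∈ Ioo (0:ℝ) 1)
    (ε : ℝ) (hε : ε ∈ Ioo (0:ℝ) 1)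
    (p : (ℝ → ℝ) × (ℝ → ℝ)) (hp : p ∈ Mset)
    (h : Gg γ p < π ^ 2 / 4 * (1 - ε) ^ 2) :
    ∀ x ∈ Icc (0:ℝ) 1,
      ε * Real.sqrt (∫ t in (0:ℝ)..1, (p.1 t) ^ 2) < p.1 x := by
  obtain ⟨hW12, ζ, hζpos, hζ⟩ := hp
  obtain ⟨hW, hf, hf2⟩ := hW12
  intro x₀ hx₀
  have h01 : (0:ℝ) ≤ 1 := zero_le_one
  have huIcc : uIcc (0:ℝ) 1 = Icc (0:ℝ) 1 := uIcc_of_le h01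
  have hx₀0 : (0:ℝ) ≤ x₀ := hx₀.1
  have hx₀1 : x₀ ≤ 1 := hx₀.2
  -- continuity of y
  have hprim_cont : ContinuousOn (fun x => ∫ t in (0:ℝ)..x, p.2 t) (Icc (0:ℝ) 1) := by
    have := continuousOn_primitive_interval (a := 0) (b := 1) (μ := volume) (f := p.2)
      (by rw [huIcc]
          exact (integrableOn_Icc_iff_integrableOn_Ioc).mpr
            ((intervalIntegrable_iff_integrableOn_Ioc_of_le h01).mp hf))
    rwa [huIcc] at this
  have hy_cont : ContinuousOn p.1 (Icc (0:ℝ) 1) := by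
    apply ContinuousOn.congr (continuousOn_const.add hprim_cont)
    intro x hx; exact hW x hx
  have hy2_int : IntervalIntegrable (fun t => p.1 t ^ 2) volume 0 1 := by
    apply ContinuousOn.intervalIntegrable
    rw [huIcc]; exact hy_cont.pow 2
  set D : ℝ := ∫ t in (0:ℝ)..1, p.1 t ^ 2 with hD_def
  have hDpos : 0 < D := by
    have h1 : (∫ t in (0:ℝ)..1, ζ ^ 2) ≤ D :=
      intervalIntegral.integral_mono_on h01 intervalIntegrable_const hy2_int
        (fun t ht => pow_le_pow_left₀ hζpos.le (hζ t ht) 2)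
    have h2 : (∫ t in (0:ℝ)..1, ζ ^ 2) = ζ ^ 2 := by simp
    nlinarith [hζpos]
  set E : ℝ := ∫ t in (0:ℝ)..1, p.2 t ^ 2 with hE_def
  have hJE : E ≤ Jg γ p := by
    have hR : (0:ℝ) ≤ (∫ t in (0:ℝ)..1, p.1 t ^ (2 * γ / (γ - 1))) ^ ((γ - 1) / γ) := by
      apply Real.rpow_nonneg
      exact intervalIntegral.integral_nonneg h01 fun u hu =>
        Real.rpow_nonneg (le_trans hζpos.le (hζ u hu)) _
    have h2 : E ≤ E + (∫ t in (0:ℝ)..1, p.1 t ^ (2 * γ / (γ - 1))) ^ ((γ - 1) / γ) :=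
      le_add_of_nonneg_right hR
    unfold Jg
    rw [← hE_def]
    exact h2
  have hE : E < π ^ 2 / 4 * (1 - ε) ^ 2 * D := by
    have h' : Jg γ p / D < π ^ 2 / 4 * (1 - ε) ^ 2 := h
    have := (div_lt_iff₀ hDpos).mp h'
    linarith
  -- measurable representative of p.2
  have hfae : AEStronglyMeasurable p.2 (volume.restrict (Ioc (0:ℝ) 1)) :=
    hf.1.aestronglyMeasurable
  obtain ⟨f', hf'meas, hff'⟩ : ∃ f' : ℝ → ℝ, Measurable f' ∧
      p.2 =ᵐ[volume.restrict (Ioc (0:ℝ) 1)] f' :=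
    ⟨hfae.mk p.2, hfae.stronglyMeasurable_mk.measurable, hfae.ae_eq_mk⟩
  have hsub : ∀ u v : ℝ, 0 ≤ u → v ≤ 1 →
      p.2 =ᵐ[volume.restrict (Ioc u v)] f' := fun u v hu hv =>
    hff'.filter_mono (ae_mono (Measure.restrict_mono (Ioc_subset_Ioc hu hv) le_rfl))
  have hint_eq : ∀ u v : ℝ, 0 ≤ u → v ≤ 1 → u ≤ v →
      (∫ t in u..v, p.2 t) = ∫ t in u..v, f' t := by
    intro u v hu hv huv
    apply intervalIntegral.integral_congr_ae
    have hh := hsub u v hu hv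
    rw [Filter.EventuallyEq, ae_restrict_iff' measurableSet_Ioc] at hh
    rw [uIoc_of_le huv]
    exact hh
  have hint_eq2 : ∀ u v : ℝ, 0 ≤ u → v ≤ 1 → u ≤ v →
      (∫ t in u..v, p.2 t ^ 2) = ∫ t in u..v, f' t ^ 2 := by
    intro u v hu hv huv
    apply intervalIntegral.integral_congr_ae
    have hh := hsub u v hu hv
    rw [Filter.EventuallyEq, ae_restrict_iff' measurableSet_Ioc] at hh
    rw [uIoc_of_le huv]
    filter_upwards [hh] with x hx hxm
    rw [hx hxm]
  have hmono : ∀ u v : ℝ, 0 ≤ u → v ≤ 1 → u ≤ v → uIcc u v ⊆ uIcc (0:ℝ) 1 := by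
    intro u v hu hv huv
    rw [uIcc_of_le huv, huIcc]
    exact Icc_subset_Icc hu hv
  have hf'_int : ∀ u v : ℝ, 0 ≤ u → v ≤ 1 → u ≤ v →
      IntervalIntegrable f' volume u v := by
    intro u v hu hv huv
    rw [intervalIntegrable_iff_integrableOn_Ioc_of_le huv]
    exact Integrable.congr ((intervalIntegrable_iff_integrableOn_Ioc_of_le huv).mp
      (hf.mono_set (hmono u v hu hv huv))) (hsub u v hu hv)
  have hf'2_int : ∀ u v : ℝ, 0 ≤ u → v ≤ 1 → u ≤ v →
      IntervalIntegrable (fun t => f' t ^ 2) volume u v := by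
    intro u v hu hv huv
    rw [intervalIntegrable_iff_integrableOn_Ioc_of_le huv]
    apply Integrable.congr ((intervalIntegrable_iff_integrableOn_Ioc_of_le huv).mp
      (hf2.mono_set (hmono u v hu hv huv)))
    filter_upwards [hsub u v hu hv] with x hx
    rw [hx]
  -- the primitive based at x₀
  set g : ℝ → ℝ := fun x => ∫ t in x₀..x, p.2 t with hg_def
  have hg_cont' : ContinuousOn g (uIcc (0:ℝ) 1) :=
    continuousOn_primitive_interval' hf (by rw [huIcc]; exact hx₀)
  have hg_int : IntervalIntegrable g volume 0 1 := hg_cont'.intervalIntegrable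
  have hg2_int : IntervalIntegrable (fun x => g x ^ 2) volume 0 1 :=
    (hg_cont'.pow 2).intervalIntegrable
  have hg2a : IntervalIntegrable (fun x => g x ^ 2) volume 0 x₀ :=
    hg2_int.mono_set (hmono 0 x₀ le_rfl hx₀1 hx₀0)
  have hg2b : IntervalIntegrable (fun x => g x ^ 2) volume x₀ 1 :=
    hg2_int.mono_set (hmono x₀ 1 hx₀0 le_rfl hx₀1)
  have hyg : ∀ x ∈ Icc (0:ℝ) 1, p.1 x = p.1 x₀ + g x := by
    intro x hx
    have h1 := hW x hx
    have h2 := hW x₀ hx₀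
    have h3 : (∫ t in (0:ℝ)..x, p.2 t) - ∫ t in (0:ℝ)..x₀, p.2 t = g x :=
      intervalIntegral.integral_interval_sub_left
        (hf.mono_set (hmono 0 x le_rfl hx.2 hx.1))
        (hf.mono_set (hmono 0 x₀ le_rfl hx₀1 hx₀0))
    rw [h1, h2]
    linarith
  have hKpos : 0 < p.1 x₀ := lt_of_lt_of_le hζpos (hζ x₀ hx₀)
  have hD_eq : D = p.1 x₀ ^ 2 + 2 * p.1 x₀ * (∫ x in (0:ℝ)..1, g x) +
      ∫ x in (0:ℝ)..1, g x ^ 2 := by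
    have h1 : D = ∫ x in (0:ℝ)..1, (p.1 x₀ + g x) ^ 2 := by
      rw [hD_def]
      apply intervalIntegral.integral_congr
      intro x hx
      rw [huIcc] at hx
      simp only [hyg x hx]
    rw [h1]
    have hexp : ∀ x, (p.1 x₀ + g x) ^ 2 =
        (p.1 x₀ ^ 2 + 2 * p.1 x₀ * g x) + g x ^ 2 := fun x => by ring
    simp_rw [hexp]
    rw [intervalIntegral.integral_add (intervalIntegrable_const.add
        (hg_int.const_mul (2 * p.1 x₀))) hg2_int,
      intervalIntegral.integral_add intervalIntegrable_const
        (hg_int.const_mul (2 * p.1 x₀)),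
      intervalIntegral.integral_const_mul, intervalIntegral.integral_const]
    simp
  have hsplit : (∫ x in (0:ℝ)..1, g x ^ 2) =
      (∫ x in (0:ℝ)..x₀, g x ^ 2) + ∫ x in x₀..1, g x ^ 2 :=
    (intervalIntegral.integral_add_adjacent_intervals hg2a hg2b).symm
  -- right piece
  have hR := volterra_right hf'meas hx₀1 (by linarith)
    (hf'_int x₀ 1 hx₀0 le_rfl hx₀1) (hf'2_int x₀ 1 hx₀0 le_rfl hx₀1)
  have hRt : (∫ x in x₀..1, (∫ t in x₀..x, f' t) ^ 2) = ∫ x in x₀..1, g x ^ 2 := by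
    apply intervalIntegral.integral_congr
    intro x hx
    rw [uIcc_of_le hx₀1] at hx
    have hh : (∫ t in x₀..x, f' t) = g x := (hint_eq x₀ x hx₀0 hx.2 hx.1).symm
    simp only [hh]
  have hRq : (∫ t in x₀..1, f' t ^ 2) = ∫ t in x₀..1, p.2 t ^ 2 :=
    (hint_eq2 x₀ 1 hx₀0 le_rfl hx₀1).symm
  rw [hRt, hRq] at hR
  -- left piece
  have hL := volterra_left hf'meas hx₀0 (by linarith)
    (hf'_int 0 x₀ le_rfl hx₀1 hx₀0) (hf'2_int 0 x₀ le_rfl hx₀1 hx₀0)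
  have hLt : (∫ x in (0:ℝ)..x₀, (∫ t in x..x₀, f' t) ^ 2) =
      ∫ x in (0:ℝ)..x₀, g x ^ 2 := by
    apply intervalIntegral.integral_congr
    intro x hx
    rw [uIcc_of_le hx₀0] at hx
    have h1 : (∫ t in x..x₀, f' t) = ∫ t in x..x₀, p.2 t :=
      (hint_eq x x₀ hx.1 hx₀1 hx.2).symm
    have h2 : (∫ t in x..x₀, p.2 t) = - g x :=
      intervalIntegral.integral_symm x₀ x
    simp only [h1, h2, neg_sq]
  have hLq : (∫ t in (0:ℝ)..x₀, f' t ^ 2) = ∫ t in (0:ℝ)..x₀, p.2 t ^ 2 :=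
    (hint_eq2 0 x₀ le_rfl hx₀1 hx₀0).symm
  rw [hLt, hLq] at hL
  -- combine
  have hEsplit : E = (∫ t in (0:ℝ)..x₀, p.2 t ^ 2) + ∫ t in x₀..1, p.2 t ^ 2 :=
    (intervalIntegral.integral_add_adjacent_intervals
      (hf2.mono_set (hmono 0 x₀ le_rfl hx₀1 hx₀0))
      (hf2.mono_set (hmono x₀ 1 hx₀0 le_rfl hx₀1))).symm
  have hB2le : (∫ x in (0:ℝ)..1, g x ^ 2) ≤ 4 / π ^ 2 * E := by
    rw [hsplit]
    have : 4 / π ^ 2 * E = 4 / π ^ 2 * (∫ t in (0:ℝ)..x₀, p.2 t ^ 2) +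
        4 / π ^ 2 * ∫ t in x₀..1, p.2 t ^ 2 := by rw [hEsplit]; ring
    rw [this]
    exact add_le_add hL hR
  set B2 : ℝ := ∫ x in (0:ℝ)..1, g x ^ 2 with hB2_def
  have hB2nn : 0 ≤ B2 :=
    intervalIntegral.integral_nonneg h01 fun u _ => sq_nonneg _
  have hm2 : (∫ x in (0:ℝ)..1, g x) ^ 2 ≤ B2 :=
    sq_integral_le_integral_sq hg_int hg2_int
  set m : ℝ := ∫ x in (0:ℝ)..1, g x with hm_def
  have hπ : (0:ℝ) < π := Real.pi_pos
  have hB2lt : B2 < (1 - ε) ^ 2 * D := by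
    have h4 : 4 / π ^ 2 * E < 4 / π ^ 2 * (π ^ 2 / 4 * (1 - ε) ^ 2 * D) :=
      mul_lt_mul_of_pos_left hE (by positivity)
    have h5 : 4 / π ^ 2 * (π ^ 2 / 4 * (1 - ε) ^ 2 * D) = (1 - ε) ^ 2 * D := by
      field_simp
    linarith
  clear_value m E B2
  set N : ℝ := Real.sqrt D with hN_def
  have hN2 : N ^ 2 = D := Real.sq_sqrt hDpos.le
  have hNpos : 0 < N := Real.sqrt_pos.mpr hDpos
  set B : ℝ := Real.sqrt B2 with hB_def
  have hBnn : 0 ≤ B := Real.sqrt_nonneg _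
  have hB2' : B ^ 2 = B2 := Real.sq_sqrt hB2nn
  clear_value D N B
  have hm : m ≤ B := by
    have h1 : |m| ≤ B := by
      rw [hB_def, ← Real.sqrt_sq_eq_abs]
      exact Real.sqrt_le_sqrt hm2
    linarith only [le_abs_self m, h1]
  have hDle : D ≤ (p.1 x₀ + B) ^ 2 := by nlinarith only [hD_eq, hm, hKpos.le, hB2', hBnn]
  have hNle : N ≤ p.1 x₀ + B := by
    have hh := Real.sqrt_le_sqrt hDle
    rw [Real.sqrt_sq (by positivity), ← hN_def] at hh
    exact hh
  have hε1 : ε < 1 := hε.2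
  have hBlt : B < (1 - ε) * N := by
    have h1 : B ^ 2 < ((1 - ε) * N) ^ 2 := by
      rw [hB2']
      calc B2 < (1 - ε) ^ 2 * D := hB2lt
        _ = ((1 - ε) * N) ^ 2 := by rw [mul_pow, hN2]
    nlinarith only [h1, hBnn, mul_nonneg (by linarith only [hε1] : (0:ℝ) ≤ 1 - ε) hNpos.le]
  linarith only [hNle, hBlt, hKpos]

end
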